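/- Let R be a ring with nonzero multiplication (there exist α, β ∈ R with αβ ≠ 0). Then the restricted direct power R^(∞) is not q-compact: there is a system S of equations with constants from R^(∞) in two variables x, y such that every solution of S satisfies xy = 0, but for every finite subsystem S' ⊆ S there is a solution of S' with xy ≠ 0. -/

import Mathlib

/-- Terms of the ring language {+, -, ·, 0} with constants from `R`. -/
inductive RTerm (R : Type) (n : ℕ) where
  | var : Fin n → RTerm R n
  | const : R → RTerm R n
  | zero : RTerm R n
  | add : RTerm R n → RTerm R n → RTerm R n
  | neg : RTerm R n → RTerm R n
  | mul : RTerm R n → RTerm R n → RTerm R n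

def RTerm.eval {R : Type} [NonUnitalRing R] {n : ℕ} (v : Fin n → R) : RTerm R n → R
  | .var i => v i
  | .const a => a
  | .zero => 0
  | .add t s => t.eval v + s.eval v
  | .neg t => - t.eval v
  | .mul t s => t.eval v * s.eval v

def SolSet {R : Type} [NonUnitalRing R] {n : ℕ} (S : Set (RTerm R n × RTerm R n)) :
    Set (Fin n → R) :=
  {v | ∀ e ∈ S, e.1.eval v = e.2.eval v}

/-- The restricted direct power `R^(∞)`: the subring of the countable direct power
consisting of sequences with finite support. -/
def ringRestrictedPower (R : Type) [NonUnitalRing R] : NonUnitalSubring (ℕ → R) where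
  carrier := {f | {i | f i ≠ 0}.Finite}
  zero_mem' := by simp
  add_mem' := by
    intro f g hf hg
    apply (Set.Finite.union hf hg).subset
    intro i hi
    by_contra h
    simp only [Set.mem_union, Set.mem_setOf_eq, not_or, not_not] at h
    exact hi (show (f + g) i = 0 by simp [h.1, h.2])
  neg_mem' := by
    intro f hf
    apply hf.subset
    intro i hi
    simp only [Set.mem_setOf_eq, Pi.neg_apply, ne_eq, neg_eq_zero] at hi ⊢
    exact hi
  mul_mem' := by
    intro f g hf hg
    apply hf.subset
    intro i hi
    simp only [Set.mem_setOf_eq] at hi ⊢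
    intro h
    exact hi (show (f * g) i = 0 by simp [h])

/-- The equation `x · y = 0` in two variables. -/
def mulZeroEq (H : Type) [NonUnitalRing H] : RTerm H 2 × RTerm H 2 :=
  (.mul (.var 0) (.var 1), .zero)

section Aux

variable {R : Type} [NonUnitalRing R]

lemma rrp_coe_mul_apply (x y : ringRestrictedPower R) (i : ℕ) :
    ((x * y : ringRestrictedPower R) : ℕ → R) i = (x : ℕ → R) i * (y : ℕ → R) i := rfl

/-- An element of the restricted power supported on a finite set `F`, with value `r` there. -/
noncomputable def indElt (F : Set ℕ) (hF : F.Finite) (r : R) : ringRestrictedPower R :=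
  ⟨F.indicator (fun _ => r), by
    apply hF.subset
    intro i hi
    simp only [Set.mem_setOf_eq] at hi
    by_contra h
    exact hi (Set.indicator_of_notMem h _)⟩

lemma indElt_of_mem {F : Set ℕ} (hF : F.Finite) (r : R) {i : ℕ} (hi : i ∈ F) :
    ((indElt F hF r : ringRestrictedPower R) : ℕ → R) i = r := by
  show F.indicator (fun _ => r) i = r
  exact Set.indicator_of_mem hi _

lemma indElt_of_not_mem {F : Set ℕ} (hF : F.Finite) (r : R) {i : ℕ} (hi : i ∉ F) :
    ((indElt F hF r : ringRestrictedPower R) : ℕ → R) i = 0 := by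
  show F.indicator (fun _ => r) i = 0
  exact Set.indicator_of_notMem hi _

/-- The `m`-th equation of the system: `x · (b·δₘ) = (ab)·δₘ`. -/
noncomputable def sysEq (a b : R) (m : ℕ) :
    RTerm (ringRestrictedPower R) 2 × RTerm (ringRestrictedPower R) 2 :=
  (.mul (.var 0) (.const (indElt {m} (Set.finite_singleton m) b)),
   .const (indElt {m} (Set.finite_singleton m) (a * b)))

end Aux

theorem ring_restricted_power_not_qcompact {R : Type} [NonUnitalRing R]
    (hnz : ∃ a b : R, a * b ≠ 0) :
    ∃ S : Set (RTerm (ringRestrictedPower R) 2 × RTerm (ringRestrictedPower R) 2),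
      SolSet S ⊆ SolSet {mulZeroEq (ringRestrictedPower R)} ∧
      ∀ S' ⊆ S, S'.Finite →
        ∃ v, v ∈ SolSet S' ∧ v ∉ SolSet {mulZeroEq (ringRestrictedPower R)} := by
  obtain ⟨a, b, hab⟩ := hnz
  refine ⟨Set.range (sysEq a b), ?_, ?_⟩
  · -- SolSet S is empty: a solution has finite support, forcing a*b = 0.
    intro v hv
    exfalso
    have hsupp : {i | ((v 0 : ringRestrictedPower R) : ℕ → R) i ≠ 0}.Finite := (v 0).2
    obtain ⟨m, hm⟩ : ∃ m, ((v 0 : ringRestrictedPower R) : ℕ → R) m = 0 := by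
      by_contra h
      push_neg at h
      refine (Set.infinite_univ (α := ℕ)) ?_
      have huniv : {i | ((v 0 : ringRestrictedPower R) : ℕ → R) i ≠ 0} = Set.univ := by
        ext i; simp [h i]
      rw [← huniv]; exact hsupp
    have heq := hv (sysEq a b m) ⟨m, rfl⟩
    simp only [sysEq, RTerm.eval] at heq
    have hcoord := congrArg (fun f : ringRestrictedPower R => (f : ℕ → R) m) heq
    simp only [rrp_coe_mul_apply] at hcoord
    rw [indElt_of_mem _ _ (Set.mem_singleton _), indElt_of_mem _ _ (Set.mem_singleton _), hm, zero_mul] at hcoord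
    exact hab hcoord.symm
  · -- every finite subsystem has a solution with xy ≠ 0
    intro S' hS'sub hS'fin
    have hinj : Function.Injective (sysEq a b (R := R)) := by
      intro m k h
      have h2 := congrArg Prod.snd h
      simp only [sysEq] at h2
      have h3 : (indElt {m} (Set.finite_singleton m) (a * b) : ringRestrictedPower R)
          = indElt {k} (Set.finite_singleton k) (a * b) := by
        injection h2
      by_contra hmk
      have h4 := congrArg (fun f : ringRestrictedPower R => (f : ℕ → R) m) h3
      rw [indElt_of_mem _ _ (Set.mem_singleton _),
        indElt_of_not_mem _ _ (by simpa using hmk : m ∉ ({k} : Set ℕ))] at h4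
      exact hab h4
    set T : Set ℕ := insert 0 (sysEq a b ⁻¹' S') with hT
    have hTfin : T.Finite :=
      Set.Finite.insert 0 (Set.Finite.preimage hinj.injOn hS'fin)
    set X := indElt T hTfin a with hX
    set Y := indElt T hTfin b with hY
    refine ⟨![X, Y], ?_, ?_⟩
    · intro e he
      obtain ⟨m, rfl⟩ := hS'sub he
      have hmT : m ∈ T := Set.mem_insert_of_mem 0 he
      simp only [sysEq, RTerm.eval, Matrix.cons_val_zero]
      apply Subtype.ext
      funext i
      rw [rrp_coe_mul_apply]
      by_cases hi : i = m
      · subst hi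
        rw [indElt_of_mem _ _ (Set.mem_singleton _), indElt_of_mem _ _ (Set.mem_singleton _), hX, indElt_of_mem _ _ hmT]
      · rw [indElt_of_not_mem _ _ (by simpa using hi : i ∉ ({m} : Set ℕ)),
          indElt_of_not_mem _ _ (by simpa using hi : i ∉ ({m} : Set ℕ)), mul_zero]
    · intro hsol
      have hz := hsol (mulZeroEq (ringRestrictedPower R)) rfl
      simp only [mulZeroEq, RTerm.eval, Matrix.cons_val_zero, Matrix.cons_val_one,
        Matrix.head_cons] at hz
      have h0T : (0 : ℕ) ∈ T := Set.mem_insert 0 _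
      have hcoord := congrArg (fun f : ringRestrictedPower R => (f : ℕ → R) 0) hz
      simp only [rrp_coe_mul_apply] at hcoord
      rw [hX, hY, indElt_of_mem _ _ h0T, indElt_of_mem _ _ h0T] at hcoord
      exact hab hcoord
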